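/- If a plane ε of PG(5,K) (a 3-dimensional subspace of V) is external to the Klein quadric H₅, then its polar subspace π₅(ε) (which is again a plane, since B is nondegenerate) is also external to H₅. -/

import Mathlib

/-- The Klein quadratic form on `K^6`. -/
def kleinQ {K : Type*} [Field K] (x : Fin 6 → K) : K :=
  x 0 * x 1 + x 2 * x 3 + x 4 * x 5

/-- The polar bilinear form `B(x,y) = Q(x+y) - Q(x) - Q(y)`. -/
def kleinB {K : Type*} [Field K] (x y : Fin 6 → K) : K :=
  kleinQ (x + y) - kleinQ x - kleinQ y

/-- The polar subspace `π₅(S)` of a subspace `S`. -/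
def kleinPolar {K : Type*} [Field K] (S : Submodule K (Fin 6 → K)) :
    Submodule K (Fin 6 → K) where
  carrier := {y | ∀ s ∈ S, kleinB s y = 0}
  add_mem' := by
    intro a b ha hb s hs
    have h1 := ha s hs
    have h2 := hb s hs
    simp only [kleinB, kleinQ, Pi.add_apply] at *
    linear_combination h1 + h2
  zero_mem' := by
    intro s hs
    simp [kleinB, kleinQ]
  smul_mem' := by
    intro c a ha s hs
    have h1 := ha s hs
    simp only [kleinB, kleinQ, Pi.add_apply, Pi.smul_apply, smul_eq_mul] at *
    linear_combination c * h1

/-- `τ` is a tangent hyperplane of the Klein quadric. -/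
def IsTangentHyperplane {K : Type*} [Field K] (τ : Submodule K (Fin 6 → K)) : Prop :=
  ∃ x : Fin 6 → K, x ≠ 0 ∧ kleinQ x = 0 ∧ τ = kleinPolar (Submodule.span K {x})

/-- A subspace is external to the Klein quadric. -/
def IsExternal {K : Type*} [Field K] (S : Submodule K (Fin 6 → K)) : Prop :=
  ∀ s ∈ S, s ≠ 0 → kleinQ s ≠ 0

/-- A `0`-secant of the Klein quadric: an external line. -/
def IsSecant {K : Type*} [Field K] (G : Submodule K (Fin 6 → K)) : Prop :=
  Module.finrank K G = 2 ∧ IsExternal G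

/-- The pencil of lines with vertex `v` and carrier plane `κ`. -/
def pencil {K : Type*} [Field K] (v κ : Submodule K (Fin 6 → K)) :
    Set (Submodule K (Fin 6 → K)) :=
  {X | Module.finrank K X = 2 ∧ v ≤ X ∧ X ≤ κ}

/-- An hfd line set: a set of `0`-secants such that every tangent hyperplane
contains exactly one member. -/
def IsHfd {K : Type*} [Field K] (H : Set (Submodule K (Fin 6 → K))) : Prop :=
  (∀ G ∈ H, IsSecant G) ∧
    ∀ τ : Submodule K (Fin 6 → K), IsTangentHyperplane τ → ∃! G, G ∈ H ∧ G ≤ τ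

/-- A pencilled hfd line set: every member lies in a pencil entirely contained in `H`. -/
def IsPencilledHfd {K : Type*} [Field K] (H : Set (Submodule K (Fin 6 → K))) : Prop :=
  IsHfd H ∧
    ∀ G ∈ H, ∃ v κ : Submodule K (Fin 6 → K), Module.finrank K v = 1 ∧
      Module.finrank K κ = 3 ∧ v ≤ κ ∧ pencil v κ ⊆ H ∧ G ∈ pencil v κ

/-- `v` is a vertex of the pencilled hfd line set `H`. -/
def IsVertex {K : Type*} [Field K] (H : Set (Submodule K (Fin 6 → K)))
    (v : Submodule K (Fin 6 → K)) : Prop :=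
  Module.finrank K v = 1 ∧ ∃ κ : Submodule K (Fin 6 → K),
    Module.finrank K κ = 3 ∧ v ≤ κ ∧ pencil v κ ⊆ H

/-- `κ` is a carrier plane of the pencilled hfd line set `H`. -/
def IsCarrier {K : Type*} [Field K] (H : Set (Submodule K (Fin 6 → K)))
    (κ : Submodule K (Fin 6 → K)) : Prop :=
  Module.finrank K κ = 3 ∧ ∃ v : Submodule K (Fin 6 → K),
    Module.finrank K v = 1 ∧ v ≤ κ ∧ pencil v κ ⊆ H


section Aux

variable {K : Type*} [Field K]

lemma kleinB_eq (x y : Fin 6 → K) :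
    kleinB x y = x 0 * y 1 + x 1 * y 0 + x 2 * y 3 + x 3 * y 2 + x 4 * y 5 + x 5 * y 4 := by
  simp only [kleinB, kleinQ, Pi.add_apply]; ring

lemma kleinB_comm (x y : Fin 6 → K) : kleinB x y = kleinB y x := by
  simp only [kleinB_eq]; ring

/-- The Klein bilinear form as a mathlib `BilinForm`. -/
def kleinBForm (K : Type*) [Field K] : LinearMap.BilinForm K (Fin 6 → K) :=
  LinearMap.mk₂ K kleinB
    (fun x x' y => by simp only [kleinB_eq, Pi.add_apply]; ring)
    (fun c x y => by simp only [kleinB_eq, Pi.smul_apply, smul_eq_mul]; ring)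
    (fun x y y' => by simp only [kleinB_eq, Pi.add_apply]; ring)
    (fun c x y => by simp only [kleinB_eq, Pi.smul_apply, smul_eq_mul]; ring)

@[simp] lemma kleinBForm_apply (x y : Fin 6 → K) :
    kleinBForm K x y = kleinB x y := rfl

/-- A convenient constructor for vectors in `K^6`. -/
def mk6 (a b c d e f : K) : Fin 6 → K := ![a, b, c, d, e, f]

@[simp] lemma mk6_0 (a b c d e f : K) : mk6 a b c d e f 0 = a := rfl
@[simp] lemma mk6_1 (a b c d e f : K) : mk6 a b c d e f 1 = b := rfl
@[simp] lemma mk6_2 (a b c d e f : K) : mk6 a b c d e f 2 = c := rfl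
@[simp] lemma mk6_3 (a b c d e f : K) : mk6 a b c d e f 3 = d := rfl
@[simp] lemma mk6_4 (a b c d e f : K) : mk6 a b c d e f 4 = e := rfl
@[simp] lemma mk6_5 (a b c d e f : K) : mk6 a b c d e f 5 = f := rfl

lemma kleinBForm_refl : (kleinBForm K).IsRefl := by
  intro x y h
  rwa [kleinBForm_apply, kleinB_comm] at h

lemma kleinBForm_nondeg : (kleinBForm K).Nondegenerate := by
  refine (LinearMap.IsRefl.nondegenerate_iff_separatingLeft (B := kleinBForm K) kleinBForm_refl).mpr ?_
  intro x h
  have h0 := h (mk6 0 1 0 0 0 0)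
  have h1 := h (mk6 1 0 0 0 0 0)
  have h2 := h (mk6 0 0 0 1 0 0)
  have h3 := h (mk6 0 0 1 0 0 0)
  have h4 := h (mk6 0 0 0 0 0 1)
  have h5 := h (mk6 0 0 0 0 1 0)
  simp only [kleinBForm_apply, kleinB_eq, mk6_0, mk6_1, mk6_2, mk6_3, mk6_4, mk6_5,
    mul_zero, mul_one, zero_add, add_zero, zero_mul] at h0 h1 h2 h3 h4 h5
  funext i
  fin_cases i <;> simp_all

lemma kleinPolar_eq_orthogonal (S : Submodule K (Fin 6 → K)) :
    kleinPolar S = (kleinBForm K).orthogonal S := by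
  ext x; exact Iff.rfl

/-- Core argument: if an external plane `ε` is perpendicular to a nonzero
singular vector `y`, we get a contradiction by intersecting `ε` with a totally
singular `3`-space through `y` inside the tangent hyperplane at `y`. -/
lemma klein_core (ε : Submodule K (Fin 6 → K))
    (hdim : Module.finrank K ε = 3) (hext : IsExternal ε)
    (y u v z : Fin 6 → K)
    (hz : kleinB y z ≠ 0)
    (hind : ∀ a b c : K, a • y + b • u + c • v = 0 → a = 0 ∧ b = 0 ∧ c = 0)
    (hQ : ∀ a b c : K, kleinQ (a • y + b • u + c • v) = 0)
    (hyu : kleinB y u = 0) (hyv : kleinB y v = 0) (hyy : kleinB y y = 0)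
    (hperp : ∀ s ∈ ε, kleinB s y = 0) : False := by
  classical
  set φ : (Fin 6 → K) →ₗ[K] K := kleinBForm K y with hφ
  have hφz : φ z = kleinB y z := rfl
  have hφne : φ ≠ 0 := by
    intro h
    rw [h] at hφz
    exact hz (by simpa using hφz.symm)
  have hV : Module.finrank K (Fin 6 → K) = 6 := by simp
  have hker : Module.finrank K (LinearMap.ker φ) = 5 := by
    have h1 := LinearMap.finrank_range_add_finrank_ker φ
    have hle : Module.finrank K (LinearMap.range φ) ≤ 1 := by
      simpa using Submodule.finrank_le (LinearMap.range φ)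
    have hne : LinearMap.range φ ≠ ⊥ := by
      simpa only [ne_eq, LinearMap.range_eq_bot] using hφne
    have h2 : 1 ≤ Module.finrank K (LinearMap.range φ) :=
      Submodule.one_le_finrank_iff.mpr hne
    rw [hV] at h1
    omega
  have hindep : LinearIndependent K ![y, u, v] := by
    rw [Fintype.linearIndependent_iff]
    intro g hg
    rw [Fin.sum_univ_three] at hg
    simp only [Matrix.cons_val_zero, Matrix.cons_val_one, Matrix.head_cons,
      Matrix.cons_val_two, Matrix.tail_cons] at hg
    obtain ⟨h0, h1, h2⟩ := hind _ _ _ hg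
    intro i; fin_cases i <;> assumption
  set T := Submodule.span K (Set.range ![y, u, v]) with hT
  have hTdim : Module.finrank K T = 3 := by
    rw [hT, finrank_span_eq_card hindep]; simp
  have hTW : T ≤ LinearMap.ker φ := by
    rw [hT, Submodule.span_le]
    rintro x ⟨i, rfl⟩
    fin_cases i <;>
      simp only [Matrix.cons_val_zero, Matrix.cons_val_one, Matrix.head_cons,
        Matrix.cons_val_two, Matrix.tail_cons, SetLike.mem_coe, LinearMap.mem_ker] <;>
      first
        | exact hyy
        | exact hyu
        | exact hyv
  have hεW : ε ≤ LinearMap.ker φ := by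
    intro s hs
    have h := hperp s hs
    have hφs : φ s = kleinB y s := rfl
    rw [LinearMap.mem_ker, hφs, kleinB_comm]
    exact h
  have hsup : Module.finrank K (T ⊔ ε : Submodule K (Fin 6 → K)) ≤ 5 := by
    rw [← hker]
    exact Submodule.finrank_mono (sup_le hTW hεW)
  have hie := Submodule.finrank_sup_add_finrank_inf_eq T ε
  have hinf : (T ⊓ ε : Submodule K (Fin 6 → K)) ≠ ⊥ := by
    intro hb
    rw [hb, hTdim, hdim, finrank_bot] at hie
    omega
  obtain ⟨s, hsmem, hsne⟩ := Submodule.exists_mem_ne_zero_of_ne_bot hinf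
  obtain ⟨hsT, hsε⟩ := hsmem
  rw [SetLike.mem_coe, hT, Submodule.mem_span_range_iff_exists_fun] at hsT
  obtain ⟨c, hc⟩ := hsT
  rw [Fin.sum_univ_three] at hc
  simp only [Matrix.cons_val_zero, Matrix.cons_val_one, Matrix.head_cons,
    Matrix.cons_val_two, Matrix.tail_cons] at hc
  have hQs : kleinQ s = 0 := by rw [← hc]; exact hQ _ _ _
  exact hext s hsε hsne hQs

end Aux

/-- Lemma 4.3.
The polar plane of an external plane is again a plane, and is external to the
Klein quadric. -/
theorem polar_of_external_plane_external {K : Type*} [Field K]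
    (ε : Submodule K (Fin 6 → K)) (hdim : Module.finrank K ε = 3)
    (hext : IsExternal ε) :
    Module.finrank K (kleinPolar ε) = 3 ∧ IsExternal (kleinPolar ε) := by
  constructor
  · rw [kleinPolar_eq_orthogonal,
      LinearMap.BilinForm.finrank_orthogonal kleinBForm_nondeg, hdim]
    simp
  · intro y hy hyne hQy
    have hperp : ∀ s ∈ ε, kleinB s y = 0 := hy
    have hQy' : y 0 * y 1 + y 2 * y 3 + y 4 * y 5 = 0 := hQy
    have hyy : kleinB y y = 0 := by
      simp only [kleinB_eq]; linear_combination 2 * hQy'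
    obtain ⟨i, hi⟩ : ∃ i, y i ≠ 0 := by
      by_contra hcon
      push_neg at hcon
      exact hyne (funext fun i => hcon i)
    fin_cases i
    · refine klein_core ε hdim hext y (mk6 0 (-(y 3)) (y 0) 0 0 0) (mk6 0 (-(y 5)) 0 0 (y 0) 0) (mk6 0 1 0 0 0 0) ?_ ?_ ?_ ?_ ?_ hyy hperp
      · simp only [kleinB_eq, mk6_0, mk6_1, mk6_2, mk6_3, mk6_4, mk6_5, mul_zero, zero_mul, mul_one, add_zero, zero_add]
        exact hi
      · intro a b c h
        have e0 := congrFun h 0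
        have e1 := congrFun h 2
        have e2 := congrFun h 4
        simp only [Pi.add_apply, Pi.smul_apply, smul_eq_mul, Pi.zero_apply, mk6_0, mk6_1, mk6_2, mk6_3, mk6_4, mk6_5,
          mul_zero, add_zero, zero_add, mul_neg, mul_one, neg_zero] at e0 e1 e2
        have ha : a = 0 := by
          rcases mul_eq_zero.mp e0 with h' | h'
          · exact h'
          · exact absurd h' hi
        subst ha
        simp only [zero_mul, zero_add, neg_zero, add_zero] at e1 e2
        have hb : b = 0 := by
          rcases mul_eq_zero.mp e1 with h' | h'
          · exact h'
          · exact absurd h' hi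
        have hc : c = 0 := by
          rcases mul_eq_zero.mp e2 with h' | h'
          · exact h'
          · exact absurd h' hi
        exact ⟨rfl, hb, hc⟩
      · intro a b c
        simp only [kleinQ, Pi.add_apply, Pi.smul_apply, smul_eq_mul, mk6_0, mk6_1, mk6_2, mk6_3, mk6_4, mk6_5]
        linear_combination a ^ 2 * hQy'
      · simp only [kleinB_eq, mk6_0, mk6_1, mk6_2, mk6_3, mk6_4, mk6_5]
        ring
      · simp only [kleinB_eq, mk6_0, mk6_1, mk6_2, mk6_3, mk6_4, mk6_5]
        ring
    · refine klein_core ε hdim hext y (mk6 (-(y 2)) 0 0 (y 1) 0 0) (mk6 (-(y 4)) 0 0 0 0 (y 1)) (mk6 1 0 0 0 0 0) ?_ ?_ ?_ ?_ ?_ hyy hperp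
      · simp only [kleinB_eq, mk6_0, mk6_1, mk6_2, mk6_3, mk6_4, mk6_5, mul_zero, zero_mul, mul_one, add_zero, zero_add]
        exact hi
      · intro a b c h
        have e0 := congrFun h 1
        have e1 := congrFun h 3
        have e2 := congrFun h 5
        simp only [Pi.add_apply, Pi.smul_apply, smul_eq_mul, Pi.zero_apply, mk6_0, mk6_1, mk6_2, mk6_3, mk6_4, mk6_5,
          mul_zero, add_zero, zero_add, mul_neg, mul_one, neg_zero] at e0 e1 e2
        have ha : a = 0 := by
          rcases mul_eq_zero.mp e0 with h' | h'
          · exact h'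
          · exact absurd h' hi
        subst ha
        simp only [zero_mul, zero_add, neg_zero, add_zero] at e1 e2
        have hb : b = 0 := by
          rcases mul_eq_zero.mp e1 with h' | h'
          · exact h'
          · exact absurd h' hi
        have hc : c = 0 := by
          rcases mul_eq_zero.mp e2 with h' | h'
          · exact h'
          · exact absurd h' hi
        exact ⟨rfl, hb, hc⟩
      · intro a b c
        simp only [kleinQ, Pi.add_apply, Pi.smul_apply, smul_eq_mul, mk6_0, mk6_1, mk6_2, mk6_3, mk6_4, mk6_5]
        linear_combination a ^ 2 * hQy'
      · simp only [kleinB_eq, mk6_0, mk6_1, mk6_2, mk6_3, mk6_4, mk6_5]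
        ring
      · simp only [kleinB_eq, mk6_0, mk6_1, mk6_2, mk6_3, mk6_4, mk6_5]
        ring
    · refine klein_core ε hdim hext y (mk6 (y 2) 0 0 (-(y 1)) 0 0) (mk6 0 0 0 (-(y 5)) (y 2) 0) (mk6 0 0 0 1 0 0) ?_ ?_ ?_ ?_ ?_ hyy hperp
      · simp only [kleinB_eq, mk6_0, mk6_1, mk6_2, mk6_3, mk6_4, mk6_5, mul_zero, zero_mul, mul_one, add_zero, zero_add]
        exact hi
      · intro a b c h
        have e0 := congrFun h 2
        have e1 := congrFun h 0
        have e2 := congrFun h 4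
        simp only [Pi.add_apply, Pi.smul_apply, smul_eq_mul, Pi.zero_apply, mk6_0, mk6_1, mk6_2, mk6_3, mk6_4, mk6_5,
          mul_zero, add_zero, zero_add, mul_neg, mul_one, neg_zero] at e0 e1 e2
        have ha : a = 0 := by
          rcases mul_eq_zero.mp e0 with h' | h'
          · exact h'
          · exact absurd h' hi
        subst ha
        simp only [zero_mul, zero_add, neg_zero, add_zero] at e1 e2
        have hb : b = 0 := by
          rcases mul_eq_zero.mp e1 with h' | h'
          · exact h'
          · exact absurd h' hi
        have hc : c = 0 := by
          rcases mul_eq_zero.mp e2 with h' | h'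
          · exact h'
          · exact absurd h' hi
        exact ⟨rfl, hb, hc⟩
      · intro a b c
        simp only [kleinQ, Pi.add_apply, Pi.smul_apply, smul_eq_mul, mk6_0, mk6_1, mk6_2, mk6_3, mk6_4, mk6_5]
        linear_combination a ^ 2 * hQy'
      · simp only [kleinB_eq, mk6_0, mk6_1, mk6_2, mk6_3, mk6_4, mk6_5]
        ring
      · simp only [kleinB_eq, mk6_0, mk6_1, mk6_2, mk6_3, mk6_4, mk6_5]
        ring
    · refine klein_core ε hdim hext y (mk6 0 (y 3) (-(y 0)) 0 0 0) (mk6 0 0 (-(y 4)) 0 0 (y 3)) (mk6 0 0 1 0 0 0) ?_ ?_ ?_ ?_ ?_ hyy hperp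
      · simp only [kleinB_eq, mk6_0, mk6_1, mk6_2, mk6_3, mk6_4, mk6_5, mul_zero, zero_mul, mul_one, add_zero, zero_add]
        exact hi
      · intro a b c h
        have e0 := congrFun h 3
        have e1 := congrFun h 1
        have e2 := congrFun h 5
        simp only [Pi.add_apply, Pi.smul_apply, smul_eq_mul, Pi.zero_apply, mk6_0, mk6_1, mk6_2, mk6_3, mk6_4, mk6_5,
          mul_zero, add_zero, zero_add, mul_neg, mul_one, neg_zero] at e0 e1 e2
        have ha : a = 0 := by
          rcases mul_eq_zero.mp e0 with h' | h'
          · exact h'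
          · exact absurd h' hi
        subst ha
        simp only [zero_mul, zero_add, neg_zero, add_zero] at e1 e2
        have hb : b = 0 := by
          rcases mul_eq_zero.mp e1 with h' | h'
          · exact h'
          · exact absurd h' hi
        have hc : c = 0 := by
          rcases mul_eq_zero.mp e2 with h' | h'
          · exact h'
          · exact absurd h' hi
        exact ⟨rfl, hb, hc⟩
      · intro a b c
        simp only [kleinQ, Pi.add_apply, Pi.smul_apply, smul_eq_mul, mk6_0, mk6_1, mk6_2, mk6_3, mk6_4, mk6_5]
        linear_combination a ^ 2 * hQy'
      · simp only [kleinB_eq, mk6_0, mk6_1, mk6_2, mk6_3, mk6_4, mk6_5]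
        ring
      · simp only [kleinB_eq, mk6_0, mk6_1, mk6_2, mk6_3, mk6_4, mk6_5]
        ring
    · refine klein_core ε hdim hext y (mk6 (y 4) 0 0 0 0 (-(y 1))) (mk6 0 0 (y 4) 0 0 (-(y 3))) (mk6 0 0 0 0 0 1) ?_ ?_ ?_ ?_ ?_ hyy hperp
      · simp only [kleinB_eq, mk6_0, mk6_1, mk6_2, mk6_3, mk6_4, mk6_5, mul_zero, zero_mul, mul_one, add_zero, zero_add]
        exact hi
      · intro a b c h
        have e0 := congrFun h 4
        have e1 := congrFun h 0
        have e2 := congrFun h 2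
        simp only [Pi.add_apply, Pi.smul_apply, smul_eq_mul, Pi.zero_apply, mk6_0, mk6_1, mk6_2, mk6_3, mk6_4, mk6_5,
          mul_zero, add_zero, zero_add, mul_neg, mul_one, neg_zero] at e0 e1 e2
        have ha : a = 0 := by
          rcases mul_eq_zero.mp e0 with h' | h'
          · exact h'
          · exact absurd h' hi
        subst ha
        simp only [zero_mul, zero_add, neg_zero, add_zero] at e1 e2
        have hb : b = 0 := by
          rcases mul_eq_zero.mp e1 with h' | h'
          · exact h'
          · exact absurd h' hi
        have hc : c = 0 := by
          rcases mul_eq_zero.mp e2 with h' | h'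
          · exact h'
          · exact absurd h' hi
        exact ⟨rfl, hb, hc⟩
      · intro a b c
        simp only [kleinQ, Pi.add_apply, Pi.smul_apply, smul_eq_mul, mk6_0, mk6_1, mk6_2, mk6_3, mk6_4, mk6_5]
        linear_combination a ^ 2 * hQy'
      · simp only [kleinB_eq, mk6_0, mk6_1, mk6_2, mk6_3, mk6_4, mk6_5]
        ring
      · simp only [kleinB_eq, mk6_0, mk6_1, mk6_2, mk6_3, mk6_4, mk6_5]
        ring
    · refine klein_core ε hdim hext y (mk6 0 (y 5) 0 0 (-(y 0)) 0) (mk6 0 0 0 (y 5) (-(y 2)) 0) (mk6 0 0 0 0 1 0) ?_ ?_ ?_ ?_ ?_ hyy hperp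
      · simp only [kleinB_eq, mk6_0, mk6_1, mk6_2, mk6_3, mk6_4, mk6_5, mul_zero, zero_mul, mul_one, add_zero, zero_add]
        exact hi
      · intro a b c h
        have e0 := congrFun h 5
        have e1 := congrFun h 1
        have e2 := congrFun h 3
        simp only [Pi.add_apply, Pi.smul_apply, smul_eq_mul, Pi.zero_apply, mk6_0, mk6_1, mk6_2, mk6_3, mk6_4, mk6_5,
          mul_zero, add_zero, zero_add, mul_neg, mul_one, neg_zero] at e0 e1 e2
        have ha : a = 0 := by
          rcases mul_eq_zero.mp e0 with h' | h'
          · exact h'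
          · exact absurd h' hi
        subst ha
        simp only [zero_mul, zero_add, neg_zero, add_zero] at e1 e2
        have hb : b = 0 := by
          rcases mul_eq_zero.mp e1 with h' | h'
          · exact h'
          · exact absurd h' hi
        have hc : c = 0 := by
          rcases mul_eq_zero.mp e2 with h' | h'
          · exact h'
          · exact absurd h' hi
        exact ⟨rfl, hb, hc⟩
      · intro a b c
        simp only [kleinQ, Pi.add_apply, Pi.smul_apply, smul_eq_mul, mk6_0, mk6_1, mk6_2, mk6_3, mk6_4, mk6_5]
        linear_combination a ^ 2 * hQy'
      · simp only [kleinB_eq, mk6_0, mk6_1, mk6_2, mk6_3, mk6_4, mk6_5]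
        ring
      · simp only [kleinB_eq, mk6_0, mk6_1, mk6_2, mk6_3, mk6_4, mk6_5]
        ring
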